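/- For every constant r > 0, there exists a pair of strongly connected graphs (G_R, G_M) on n vertices such that the fixation probability of the two-graph Moran process is o(a^{−n}) for some constant a > 1; namely G_R the complete graph and G_M the undirected star gives fixation probability at most r^{n−1}/(n−2)!. -/

import Mathlib

open Finset

variable {V : Type*} [Fintype V] [DecidableEq V]

/-- One-step transition probability of the two-graph Moran process with relative fitness `r`,
resident weight matrix `wR` and mutant weight matrix `wM`, from mutant set `S` to set `T`.
An individual is chosen with probability proportional to its fitness (residents `1`,
mutants `r`) and reproduces on a neighbour in its own graph. -/
noncomputable def moranStep (r : ℝ) (wR wM : V → V → ℝ) (S T : Finset V) : ℝ :=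
  ((∑ i ∈ S, ∑ j ∈ Sᶜ, (if T = insert j S then r * wM i j else 0)) +
   (∑ j ∈ Sᶜ, ∑ i ∈ S, (if T = S.erase i then wR j i else 0)) +
   (if T = S then (∑ i ∈ S, ∑ j ∈ S, r * wM i j) + (∑ i ∈ Sᶜ, ∑ j ∈ Sᶜ, wR i j) else 0))
  / (S.card * r + ((Fintype.card V : ℝ) - S.card))

/-- `t`-step transition probabilities of the two-graph Moran process. -/
noncomputable def moranIter (r : ℝ) (wR wM : V → V → ℝ) : ℕ → Finset V → Finset V → ℝ
  | 0 => fun S T => if T = S then 1 else 0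
  | (t + 1) => fun S T => ∑ U : Finset V, moranStep r wR wM S U * moranIter r wR wM t U T

/-- Fixation probability of the two-graph Moran process started from mutant set `S`:
the probability of eventual absorption at the all-mutant state `V` (the probability of
being at the absorbing state `univ` is nondecreasing in `t`, so the limit is the `⨆`). -/
noncomputable def fixProbFrom (r : ℝ) (wR wM : V → V → ℝ) (S : Finset V) : ℝ :=
  ⨆ t : ℕ, moranIter r wR wM t S Finset.univ

/-- Fixation probability of the two-graph Moran process started from a single
uniformly random mutant. -/
noncomputable def fixProb (r : ℝ) (wR wM : V → V → ℝ) : ℝ :=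
  (∑ u : V, fixProbFrom r wR wM {u}) / (Fintype.card V)

/-- A weight matrix is a strongly connected graph structure: positive-weight edges
connect every ordered pair of vertices. -/
def StronglyConnectedW (w : V → V → ℝ) : Prop :=
  ∀ i j : V, Relation.ReflTransGen (fun a b => 0 < w a b) i j

/-- Admissible weight matrix: nonnegative, zero diagonal, rows sum to 1. -/
def IsWeightMatrix (w : V → V → ℝ) : Prop :=
  (∀ i j, 0 ≤ w i j) ∧ (∀ i, w i i = 0) ∧ (∀ i, ∑ j, w i j = 1)

/-- Clique weight matrix on `Fin n`: every vertex reproduces uniformly on the others. -/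
noncomputable def cliqueW (n : ℕ) : Fin n → Fin n → ℝ :=
  fun i j => if i = j then 0 else 1 / ((n : ℝ) - 1)

/-- Undirected star weight matrix on `Fin n` with center `0`: the center reproduces
uniformly on the leaves, each leaf reproduces on the center. -/
noncomputable def starW (n : ℕ) (hn : 2 ≤ n) : Fin n → Fin n → ℝ :=
  fun i j =>
    if i = (⟨0, by omega⟩ : Fin n) then (if j = i then 0 else 1 / ((n : ℝ) - 1))
    else (if j = (⟨0, by omega⟩ : Fin n) then 1 else 0)

lemma sum_T_ite (c : ℝ) (X : Finset V) (φ : Finset V → ℝ) :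
    ∑ T : Finset V, (if T = X then c else 0) * φ T = c * φ X := by
  simp only [ite_mul, zero_mul]
  rw [Finset.sum_ite_eq']
  simp

lemma moran_sum_phi (r : ℝ) (wR wM : V → V → ℝ) (φ : Finset V → ℝ) (S : Finset V) :
    ∑ T : Finset V, moranStep r wR wM S T * φ T =
    ((∑ i ∈ S, ∑ j ∈ Sᶜ, r * wM i j * φ (insert j S)) +
     (∑ j ∈ Sᶜ, ∑ i ∈ S, wR j i * φ (S.erase i)) +
     ((∑ i ∈ S, ∑ j ∈ S, r * wM i j) + (∑ i ∈ Sᶜ, ∑ j ∈ Sᶜ, wR i j)) * φ S)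
    / ((S.card : ℝ) * r + ((Fintype.card V : ℝ) - S.card)) := by
  have h1 : ∑ T : Finset V,
      (∑ i ∈ S, ∑ j ∈ Sᶜ, (if T = insert j S then r * wM i j else 0)) * φ T
      = ∑ i ∈ S, ∑ j ∈ Sᶜ, r * wM i j * φ (insert j S) := by
    simp only [Finset.sum_mul]
    rw [Finset.sum_comm]
    refine Finset.sum_congr rfl fun i _ => ?_
    rw [Finset.sum_comm]
    exact Finset.sum_congr rfl fun j _ => sum_T_ite _ _ _
  have h2 : ∑ T : Finset V,
      (∑ j ∈ Sᶜ, ∑ i ∈ S, (if T = S.erase i then wR j i else 0)) * φ T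
      = ∑ j ∈ Sᶜ, ∑ i ∈ S, wR j i * φ (S.erase i) := by
    simp only [Finset.sum_mul]
    rw [Finset.sum_comm]
    refine Finset.sum_congr rfl fun j _ => ?_
    rw [Finset.sum_comm]
    exact Finset.sum_congr rfl fun i _ => sum_T_ite _ _ _
  have h3 : ∑ T : Finset V,
      (if T = S then (∑ i ∈ S, ∑ j ∈ S, r * wM i j) + (∑ i ∈ Sᶜ, ∑ j ∈ Sᶜ, wR i j) else 0) * φ T
      = ((∑ i ∈ S, ∑ j ∈ S, r * wM i j) + (∑ i ∈ Sᶜ, ∑ j ∈ Sᶜ, wR i j)) * φ S :=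
    sum_T_ite _ _ _
  unfold moranStep
  simp only [div_mul_eq_mul_div, ← Finset.sum_div]
  rw [← h1, ← h2, ← h3]
  congr 1
  rw [← Finset.sum_add_distrib, ← Finset.sum_add_distrib]
  exact Finset.sum_congr rfl fun T _ => by ring

lemma moranStep_nonneg {r : ℝ} {wR wM : V → V → ℝ} (hr : 0 ≤ r)
    (hR : ∀ i j, 0 ≤ wR i j) (hM : ∀ i j, 0 ≤ wM i j) (S T : Finset V) :
    0 ≤ moranStep r wR wM S T := by
  unfold moranStep
  apply div_nonneg
  · have : ∀ (s t : Finset V) (f : V → V → ℝ), (∀ i j, 0 ≤ f i j) →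
        (0:ℝ) ≤ ∑ i ∈ s, ∑ j ∈ t, f i j := fun s t f hf =>
      Finset.sum_nonneg fun i _ => Finset.sum_nonneg fun j _ => hf i j
    refine add_nonneg (add_nonneg ?_ ?_) ?_
    · refine Finset.sum_nonneg fun i _ => Finset.sum_nonneg fun j _ => ?_
      split
      · exact mul_nonneg hr (hM i j)
      · exact le_rfl
    · refine Finset.sum_nonneg fun j _ => Finset.sum_nonneg fun i _ => ?_
      split
      · exact hR j i
      · exact le_rfl
    · split
      · exact add_nonneg (this _ _ _ fun i j => mul_nonneg hr (hM i j)) (this _ _ _ hR)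
      · exact le_rfl
  · have h1 : (S.card : ℝ) ≤ (Fintype.card V : ℝ) := by
      exact_mod_cast Finset.card_le_univ S
    nlinarith [mul_nonneg (Nat.cast_nonneg S.card) hr]

lemma moranIter_nonneg {r : ℝ} {wR wM : V → V → ℝ} (hr : 0 ≤ r)
    (hR : ∀ i j, 0 ≤ wR i j) (hM : ∀ i j, 0 ≤ wM i j) :
    ∀ (t : ℕ) (S T : Finset V), 0 ≤ moranIter r wR wM t S T := by
  intro t
  induction t with
  | zero => intro S T; simp only [moranIter]; positivity
  | succ t ih =>
    intro S T
    exact Finset.sum_nonneg fun U _ =>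
      mul_nonneg (moranStep_nonneg hr hR hM S U) (ih U T)

lemma moranIter_le_phi {r : ℝ} {wR wM : V → V → ℝ} (hr : 0 ≤ r)
    (hR : ∀ i j, 0 ≤ wR i j) (hM : ∀ i j, 0 ≤ wM i j)
    (φ : Finset V → ℝ) (h0 : ∀ S, 0 ≤ φ S) (h1 : 1 ≤ φ Finset.univ)
    (hstep : ∀ S, ∑ T : Finset V, moranStep r wR wM S T * φ T ≤ φ S) :
    ∀ (t : ℕ) (S : Finset V), moranIter r wR wM t S Finset.univ ≤ φ S := by
  intro t
  induction t with
  | zero =>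
    intro S
    simp only [moranIter]
    split
    · next h => exact h ▸ h1
    · exact h0 S
  | succ t ih =>
    intro S
    calc ∑ U : Finset V, moranStep r wR wM S U * moranIter r wR wM t U Finset.univ
        ≤ ∑ U : Finset V, moranStep r wR wM S U * φ U :=
          Finset.sum_le_sum fun U _ =>
            mul_le_mul_of_nonneg_left (ih U) (moranStep_nonneg hr hR hM S U)
      _ ≤ φ S := hstep S

lemma fixProbFrom_le_phi {r : ℝ} {wR wM : V → V → ℝ} (hr : 0 ≤ r)
    (hR : ∀ i j, 0 ≤ wR i j) (hM : ∀ i j, 0 ≤ wM i j)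
    (φ : Finset V → ℝ) (h0 : ∀ S, 0 ≤ φ S) (h1 : 1 ≤ φ Finset.univ)
    (hstep : ∀ S, ∑ T : Finset V, moranStep r wR wM S T * φ T ≤ φ S) (S : Finset V) :
    fixProbFrom r wR wM S ≤ φ S :=
  ciSup_le fun t => moranIter_le_phi hr hR hM φ h0 h1 hstep t S

lemma fixProbFrom_nonneg {r : ℝ} {wR wM : V → V → ℝ} (hr : 0 ≤ r)
    (hR : ∀ i j, 0 ≤ wR i j) (hM : ∀ i j, 0 ≤ wM i j) (S : Finset V) :
    0 ≤ fixProbFrom r wR wM S :=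
  Real.iSup_nonneg fun t => moranIter_nonneg hr hR hM t S _

section BD
noncomputable def piBD (r : ℝ) : ℕ → ℝ
  | 0 => 1
  | (j + 1) => (Nat.factorial j : ℝ) / r ^ (j + 1)

noncomputable def Psum (r : ℝ) (k : ℕ) : ℝ := ∑ j ∈ Finset.range k, piBD r j

noncomputable def hBD (n : ℕ) (r : ℝ) (k : ℕ) : ℝ := Psum r k / Psum r n

noncomputable def gBD (n : ℕ) (r : ℝ) : ℕ → ℝ
  | 0 => 0
  | (k + 1) => (r * ((n : ℝ) - 1) * hBD n r (k + 2) + ((n : ℝ) - (k + 1)) * gBD n r k)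
      / (r * ((n : ℝ) - 1) + ((n : ℝ) - (k + 1)))

variable {n : ℕ} {r : ℝ}

lemma piBD_pos (hr : 0 < r) (j : ℕ) : 0 < piBD r j := by
  cases j with
  | zero => norm_num [piBD]
  | succ j =>
    simp only [piBD]
    positivity

lemma Psum_succ {k : ℕ} : Psum r (k + 1) = Psum r k + piBD r k := Finset.sum_range_succ _ _

lemma Psum_pos (hr : 0 < r) {k : ℕ} (hk : 0 < k) : 0 < Psum r k :=
  Finset.sum_pos (fun j _ => piBD_pos hr j) (by simp [Finset.nonempty_range_iff]; omega)

lemma Psum_mono (hr : 0 < r) {k l : ℕ} (h : k ≤ l) : Psum r k ≤ Psum r l :=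
  Finset.sum_le_sum_of_subset_of_nonneg (Finset.range_subset_range.mpr h)
    (fun j _ _ => (piBD_pos hr j).le)

lemma hBD_nonneg (hr : 0 < r) (hn : 0 < n) (k : ℕ) : 0 ≤ hBD n r k :=
  div_nonneg (Finset.sum_nonneg fun j _ => (piBD_pos hr j).le) (Psum_pos hr hn).le

lemma hBD_mono (hr : 0 < r) (hn : 0 < n) {k l : ℕ} (h : k ≤ l) : hBD n r k ≤ hBD n r l :=
  by apply div_le_div_of_nonneg_right ?_ ?_ <;> [exact Psum_mono hr h; exact (Psum_pos hr hn).le]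

lemma hBD_univ (hr : 0 < r) (hn : 0 < n) : hBD n r n = 1 :=
  div_self (Psum_pos hr hn).ne'

lemma pi_rec (hr : 0 < r) (j : ℕ) :
    r * piBD r (j + 2) = ((j : ℝ) + 1) * piBD r (j + 1) := by
  simp only [piBD, Nat.factorial_succ, Nat.cast_mul, Nat.cast_add, Nat.cast_one]
  field_simp
  ring

lemma pi_one (hr : 0 < r) : r * piBD r 1 = 1 := by
  simp only [piBD, Nat.factorial_zero, Nat.cast_one, zero_add, pow_one]
  field_simp

-- the resident-replacement bias  c_k = (n - k)/(n - 1)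
lemma c_nonneg (hn : 2 ≤ n) {k : ℕ} (hk : k ≤ n) :
    0 ≤ ((n : ℝ) - k) / ((n : ℝ) - 1) := by
  have h1 : (1 : ℝ) ≤ (n : ℝ) := by exact_mod_cast Nat.one_le_of_lt hn
  have h2 : (k : ℝ) ≤ (n : ℝ) := by exact_mod_cast hk
  apply div_nonneg <;> linarith

lemma numer_nonneg (hn : 2 ≤ n) {k : ℕ} (hk : k ≤ n) : (0:ℝ) ≤ (n : ℝ) - k := by
  have h2 : (k : ℝ) ≤ (n : ℝ) := by exact_mod_cast hk
  linarith

lemma denom_pos (hr : 0 < r) (hn : 2 ≤ n) {k : ℕ} (hk : k ≤ n) :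
    (0:ℝ) < r * ((n : ℝ) - 1) + ((n : ℝ) - k) := by
  have h1 : (2 : ℝ) ≤ (n : ℝ) := by exact_mod_cast hn
  have h2 := numer_nonneg hn hk
  nlinarith

lemma gBD_nonneg (hr : 0 < r) (hn : 2 ≤ n) : ∀ m, m ≤ n → 0 ≤ gBD n r m := by
  intro m
  induction m with
  | zero => intro _; simp [gBD]
  | succ m ih =>
    intro hm
    have hc : (0:ℝ) ≤ (n : ℝ) - ((m:ℝ) + 1) := by
      have := numer_nonneg hn (k := m + 1) hm; push_cast at this; exact this
    have h1 : (2 : ℝ) ≤ (n : ℝ) := by exact_mod_cast hn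
    have hn0 : 0 < n := by omega
    simp only [gBD]
    push_cast
    apply div_nonneg
    · exact add_nonneg (mul_nonneg (by nlinarith) (hBD_nonneg hr hn0 (m + 2)))
        (mul_nonneg hc (ih (by omega)))
    · nlinarith

lemma gBD_succ_eq (hr : 0 < r) (hn : 2 ≤ n) (m : ℕ) (hm : m + 1 ≤ n) :
    (r * ((n : ℝ) - 1) + ((n : ℝ) - ((m:ℝ) + 1))) * gBD n r (m + 1)
      = r * ((n : ℝ) - 1) * hBD n r (m + 2) + ((n : ℝ) - ((m:ℝ) + 1)) * gBD n r m := by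
  have hd := denom_pos hr hn (k := m + 1) hm
  push_cast at hd
  simp only [gBD]
  push_cast
  rw [mul_comm, div_mul_cancel₀ _ hd.ne']

lemma gBD_le_h (hr : 0 < r) (hn : 2 ≤ n) : ∀ m, m + 1 ≤ n → gBD n r m ≤ hBD n r (m + 1) := by
  intro m
  induction m with
  | zero => intro _; simpa [gBD] using hBD_nonneg hr (by omega : 0 < n) 1
  | succ m ih =>
    intro hm
    have hc : (0:ℝ) ≤ (n : ℝ) - ((m:ℝ) + 1) := by
      have := numer_nonneg hn (k := m + 1) (by omega); push_cast at this; exact this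
    have hd : (0:ℝ) < r * ((n : ℝ) - 1) + ((n : ℝ) - ((m:ℝ) + 1)) := by
      have := denom_pos hr hn (k := m + 1) (by omega); push_cast at this; exact this
    have h1 : (2 : ℝ) ≤ (n : ℝ) := by exact_mod_cast hn
    have hmono := hBD_mono hr (by omega : 0 < n) (Nat.le_succ (m + 1))
    have hih := le_trans (ih (by omega)) hmono
    simp only [gBD]
    push_cast
    rw [div_le_iff₀ hd]
    nlinarith [mul_le_mul_of_nonneg_left hih hc]

lemma B_ineq (hr : 0 < r) (hn : 2 ≤ n) (m : ℕ) (hm : m + 2 ≤ n) :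
    r * hBD n r (m + 2) + (m : ℝ) * hBD n r m + gBD n r m
      ≤ (r + ((m : ℝ) + 1)) * hBD n r (m + 1) := by
  have hZ : 0 < Psum r n := Psum_pos hr (by omega)
  cases m with
  | zero =>
    have key : r * Psum r 2 ≤ (r + 1) * Psum r 1 := by
      have : Psum r 2 = 1 + 1 / r := by
        simp [Psum, Finset.sum_range_succ, piBD]
      have h1 : Psum r 1 = 1 := by simp [Psum, piBD]
      rw [this, h1]
      field_simp
      norm_num
    have h3 := div_le_div_of_nonneg_right key hZ.le
    rw [show r * Psum r 2 / Psum r n = r * hBD n r 2 from by unfold hBD; ring,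
        show (r + 1) * Psum r 1 / Psum r n = (r + 1) * hBD n r 1 from by unfold hBD; ring] at h3
    simp only [gBD, Nat.cast_zero]
    push_cast
    linarith
  | succ m =>
    have hg := gBD_le_h hr hn (m + 1) (by omega)
    have e1 : Psum r (m + 3) = Psum r (m + 2) + piBD r (m + 2) := Psum_succ
    have e2 : Psum r (m + 2) = Psum r (m + 1) + piBD r (m + 1) := Psum_succ
    have e3 := pi_rec hr m
    have keyP : r * Psum r (m + 3) + ((m : ℝ) + 1) * Psum r (m + 1) + Psum r (m + 2)
        = (r + ((m : ℝ) + 2)) * Psum r (m + 2) := by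
      rw [e1, e2]
      linear_combination e3
    have h3 := div_le_div_of_nonneg_right (le_of_eq keyP) hZ.le
    rw [show (r * Psum r (m + 3) + ((m : ℝ) + 1) * Psum r (m + 1) + Psum r (m + 2)) / Psum r n
          = r * hBD n r (m + 3) + ((m : ℝ) + 1) * hBD n r (m + 1) + hBD n r (m + 2) from by
        unfold hBD; ring,
        show (r + ((m : ℝ) + 2)) * Psum r (m + 2) / Psum r n
          = (r + ((m : ℝ) + 2)) * hBD n r (m + 2) from by unfold hBD; ring] at h3
    push_cast
    push_cast at h3
    linarith

lemma hBD_one (hr : 0 < r) : hBD n r 1 = 1 / Psum r n := by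
  simp [hBD, Psum, piBD]

lemma gBD_one (hr : 0 < r) (hn : 2 ≤ n) : gBD n r 1 = 1 / Psum r n := by
  have hne : ((n : ℝ) - 1) ≠ 0 := by
    have : (2 : ℝ) ≤ (n : ℝ) := by exact_mod_cast hn
    linarith
  have hne2 : (0:ℝ) < (n : ℝ) - 1 := by
    have : (2 : ℝ) ≤ (n : ℝ) := by exact_mod_cast hn
    linarith
  have hZ : Psum r n ≠ 0 := (Psum_pos hr (by omega)).ne'
  have hP2 : Psum r 2 = (r + 1) / r := by
    simp [Psum, Finset.sum_range_succ, piBD]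
    field_simp
  simp only [gBD, Nat.cast_zero, zero_add, mul_zero, add_zero, hBD, hP2]
  rw [div_eq_div_iff (by positivity) hZ]
  field_simp

lemma one_div_Z_le (hr : 0 < r) (hn : 3 ≤ n) :
    1 / Psum r n ≤ r ^ (n - 1) / (Nat.factorial (n - 2) : ℝ) := by
  obtain ⟨m, rfl⟩ : ∃ m, n = m + 3 := ⟨n - 3, by omega⟩
  have h1 : m + 3 - 1 = m + 2 := by omega
  have h2 : m + 3 - 2 = m + 1 := by omega
  rw [h1, h2]
  have hpi : piBD r (m + 2) = (Nat.factorial (m + 1) : ℝ) / r ^ (m + 2) := rfl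
  have hle : piBD r (m + 2) ≤ Psum r (m + 3) :=
    Finset.single_le_sum (fun j _ => (piBD_pos hr j).le) (Finset.mem_range.mpr (by omega))
  calc 1 / Psum r (m + 3) ≤ 1 / piBD r (m + 2) :=
        one_div_le_one_div_of_le (piBD_pos hr _) hle
    _ = r ^ (m + 2) / (Nat.factorial (m + 1) : ℝ) := by rw [hpi, one_div_div]

end BD

lemma sum_ite_ne_of_not_mem {α : Type*} [DecidableEq α] (s : Finset α) (i : α) (hi : i ∉ s)
    (c : ℝ) : ∑ j ∈ s, (if i = j then 0 else c) = (s.card : ℝ) * c := by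
  rw [Finset.sum_congr rfl (fun j hj => if_neg (fun h : i = j => hi (h ▸ hj)))]
  simp [mul_comm]

lemma sum_ite_ne_of_mem {α : Type*} [DecidableEq α] (s : Finset α) (i : α) (hi : i ∈ s)
    (c : ℝ) : ∑ j ∈ s, (if i = j then 0 else c) = ((s.card : ℝ) - 1) * c := by
  rw [← Finset.add_sum_erase _ _ hi, if_pos rfl,
    Finset.sum_congr rfl (fun j hj => if_neg (fun h => (Finset.ne_of_mem_erase hj) h.symm))]
  have h1 : (1 : ℕ) ≤ s.card := Finset.one_le_card.mpr ⟨i, hi⟩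
  simp [Finset.card_erase_of_mem hi, Nat.cast_sub h1, mul_comm]


noncomputable def phiCS (n : ℕ) (r : ℝ) (z : Fin n) (S : Finset (Fin n)) : ℝ :=
  if z ∈ S then hBD n r S.card else gBD n r S.card

section Main

variable {n : ℕ} {r : ℝ}

lemma starW_eq (n : ℕ) (hn2 : 2 ≤ n) (z : Fin n) (hz : (z : ℕ) = 0) (i j : Fin n) :
    starW n hn2 i j
      = if i = z then (if j = z then 0 else 1 / ((n : ℝ) - 1))
        else (if j = z then 1 else 0) := by
  simp only [starW, Fin.ext_iff, hz]
  by_cases hi : (i : ℕ) = 0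
  · simp [hi]
  · simp [hi]

lemma cliqueW_eq (n : ℕ) (i j : Fin n) :
    cliqueW n i j = if i = j then 0 else 1 / ((n : ℝ) - 1) := rfl

lemma hstep_CS (hn : 3 ≤ n) (hr : 0 < r) (hn2 : 2 ≤ n) (z : Fin n) (hz : (z : ℕ) = 0)
    (S : Finset (Fin n)) :
    ∑ T : Finset (Fin n),
        moranStep r (cliqueW n) (starW n hn2) S T * phiCS n r z T
      ≤ phiCS n r z S := by
  have hnR : (3 : ℝ) ≤ (n : ℝ) := by exact_mod_cast hn
  have hne : ((n : ℝ) - 1) ≠ 0 := by linarith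
  have hk_le : S.card ≤ n := by
    simpa using Finset.card_le_univ S
  have hkR : (S.card : ℝ) ≤ (n : ℝ) := by exact_mod_cast hk_le
  have hD : (0:ℝ) < (S.card : ℝ) * r + ((Fintype.card (Fin n) : ℝ) - S.card) := by
    rw [Fintype.card_fin]
    rcases Nat.eq_zero_or_pos S.card with h | h
    · rw [h]; push_cast; linarith
    · have h1 : (1 : ℝ) ≤ (S.card : ℝ) := by exact_mod_cast h
      nlinarith
  have hCc : ((Sᶜ.card : ℕ) : ℝ) = (n : ℝ) - S.card := by
    rw [Finset.card_compl, Fintype.card_fin, Nat.cast_sub hk_le]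
  rw [moran_sum_phi, div_le_iff₀ hD]
  have hS3b : ∑ i ∈ Sᶜ, ∑ j ∈ Sᶜ, cliqueW n i j
      = ((n:ℝ) - S.card) * ((((n:ℝ) - S.card) - 1) * (1 / ((n:ℝ) - 1))) := by
    have inner : ∀ i ∈ Sᶜ, (∑ j ∈ Sᶜ, cliqueW n i j)
        = (((n:ℝ) - S.card) - 1) * (1 / ((n:ℝ) - 1)) := by
      intro i hi
      rw [Finset.sum_congr rfl (fun j _ => cliqueW_eq n i j), sum_ite_ne_of_mem Sᶜ i hi, hCc]
    rw [Finset.sum_congr rfl inner, Finset.sum_const, nsmul_eq_mul, hCc]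
  by_cases hzS : z ∈ S
  · -- center is a mutant
    obtain ⟨m, hm⟩ : ∃ m, S.card = m + 1 :=
      ⟨S.card - 1, by have := Finset.card_pos.mpr ⟨z, hzS⟩; omega⟩
    have hmn : m + 1 ≤ n := hm ▸ hk_le
    have hcard_erase : (S.erase z).card = m := by
      rw [Finset.card_erase_of_mem hzS, hm]
      omega
    have hS1 : ∑ i ∈ S, ∑ j ∈ Sᶜ, r * starW n hn2 i j * phiCS n r z (insert j S)
        = ((n:ℝ) - S.card) * (r * (1 / ((n:ℝ) - 1)) * hBD n r (S.card + 1)) := by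
      rw [← Finset.add_sum_erase _ _ hzS]
      have hrest : ∑ i ∈ S.erase z, ∑ j ∈ Sᶜ,
          r * starW n hn2 i j * phiCS n r z (insert j S) = 0 := by
        apply Finset.sum_eq_zero; intro i hi
        apply Finset.sum_eq_zero; intro j hj
        have hiz : i ≠ z := Finset.ne_of_mem_erase hi
        have hjz : j ≠ z := fun h => (Finset.mem_compl.mp hj) (h ▸ hzS)
        rw [starW_eq n hn2 z hz, if_neg hiz, if_neg hjz]
        ring
      rw [hrest, add_zero]
      have hinner : ∀ j ∈ Sᶜ, r * starW n hn2 z j * phiCS n r z (insert j S)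
          = r * (1 / ((n:ℝ) - 1)) * hBD n r (S.card + 1) := by
        intro j hj
        have hjz : j ≠ z := fun h => (Finset.mem_compl.mp hj) (h ▸ hzS)
        have hjS : j ∉ S := Finset.mem_compl.mp hj
        rw [starW_eq n hn2 z hz, if_pos rfl, if_neg hjz]
        have : phiCS n r z (insert j S) = hBD n r (S.card + 1) := by
          simp [phiCS, Finset.mem_insert, hzS, Finset.card_insert_of_notMem hjS]
        rw [this]
      rw [Finset.sum_congr rfl hinner, Finset.sum_const, nsmul_eq_mul, hCc]
    have hS2 : ∑ j ∈ Sᶜ, ∑ i ∈ S, cliqueW n j i * phiCS n r z (S.erase i)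
        = ((n:ℝ) - S.card) *
            ((1 / ((n:ℝ) - 1)) * gBD n r m + (m:ℝ) * ((1 / ((n:ℝ) - 1)) * hBD n r m)) := by
      have inner : ∀ j ∈ Sᶜ, (∑ i ∈ S, cliqueW n j i * phiCS n r z (S.erase i))
          = (1 / ((n:ℝ) - 1)) * gBD n r m + (m:ℝ) * ((1 / ((n:ℝ) - 1)) * hBD n r m) := by
        intro j hj
        have hjS : j ∉ S := Finset.mem_compl.mp hj
        rw [← Finset.add_sum_erase _ _ hzS]
        have h1 : cliqueW n j z * phiCS n r z (S.erase z) = (1 / ((n:ℝ) - 1)) * gBD n r m := by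
          have hjz : j ≠ z := fun h => hjS (h ▸ hzS)
          rw [cliqueW_eq, if_neg hjz]
          have : phiCS n r z (S.erase z) = gBD n r m := by
            simp [phiCS, Finset.notMem_erase, hcard_erase]
          rw [this]
        have h2 : ∀ i ∈ S.erase z, cliqueW n j i * phiCS n r z (S.erase i)
            = (1 / ((n:ℝ) - 1)) * hBD n r m := by
          intro i hi
          have hiz : i ≠ z := Finset.ne_of_mem_erase hi
          have hiS : i ∈ S := Finset.mem_of_mem_erase hi
          have hji : j ≠ i := fun h => hjS (h ▸ hiS)
          rw [cliqueW_eq, if_neg hji]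
          have : phiCS n r z (S.erase i) = hBD n r m := by
            have hzmem : z ∈ S.erase i := Finset.mem_erase.mpr ⟨fun h => hiz h.symm, hzS⟩
            simp [phiCS, hzmem, Finset.card_erase_of_mem hiS, hm]
          rw [this]
        rw [h1, Finset.sum_congr rfl h2, Finset.sum_const, nsmul_eq_mul, hcard_erase]
      rw [Finset.sum_congr rfl inner, Finset.sum_const, nsmul_eq_mul, hCc]
    have hS3a : ∑ i ∈ S, ∑ j ∈ S, r * starW n hn2 i j
        = (m:ℝ) * (r * (1 / ((n:ℝ) - 1))) + (m:ℝ) * r := by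
      rw [← Finset.add_sum_erase _ _ hzS]
      have h1 : ∑ j ∈ S, r * starW n hn2 z j = (m:ℝ) * (r * (1 / ((n:ℝ) - 1))) := by
        rw [← Finset.add_sum_erase _ _ hzS, starW_eq n hn2 z hz, if_pos rfl, if_pos rfl]
        have h2 : ∀ j ∈ S.erase z, r * starW n hn2 z j = r * (1 / ((n:ℝ) - 1)) := by
          intro j hj
          rw [starW_eq n hn2 z hz, if_pos rfl, if_neg (Finset.ne_of_mem_erase hj)]
        rw [Finset.sum_congr rfl h2, Finset.sum_const, nsmul_eq_mul, hcard_erase]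
        ring
      have h3 : ∀ i ∈ S.erase z, (∑ j ∈ S, r * starW n hn2 i j) = r := by
        intro i hi
        have hiz : i ≠ z := Finset.ne_of_mem_erase hi
        have : ∀ j ∈ S, r * starW n hn2 i j = if j = z then r else 0 := by
          intro j hj
          rw [starW_eq n hn2 z hz, if_neg hiz]
          split <;> ring
        rw [Finset.sum_congr rfl this, Finset.sum_ite_eq' S z, if_pos hzS]
      rw [h1, Finset.sum_congr rfl h3, Finset.sum_const, nsmul_eq_mul, hcard_erase]
    have hphiS : phiCS n r z S = hBD n r (m + 1) := by
      simp [phiCS, hzS, hm]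
    rw [hS1, hS2, hS3a, hS3b, hphiS, Fintype.card_fin, hm]
    push_cast
    rw [← sub_nonneg]
    have hkey : hBD n r (m + 1) * (((m:ℝ) + 1) * r + ((n:ℝ) - ((m:ℝ) + 1)))
          - (((n:ℝ) - ((m:ℝ) + 1)) * (r * (1 / ((n:ℝ) - 1)) * hBD n r ((m + 1) + 1))
            + ((n:ℝ) - ((m:ℝ) + 1)) *
                ((1 / ((n:ℝ) - 1)) * gBD n r m + (m:ℝ) * ((1 / ((n:ℝ) - 1)) * hBD n r m))
            + ((m:ℝ) * (r * (1 / ((n:ℝ) - 1))) + (m:ℝ) * r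
                + ((n:ℝ) - ((m:ℝ) + 1)) * (((n:ℝ) - ((m:ℝ) + 1) - 1) * (1 / ((n:ℝ) - 1))))
              * hBD n r (m + 1))
        = (((n:ℝ) - ((m:ℝ) + 1)) / ((n:ℝ) - 1)) *
            ((r + ((m:ℝ) + 1)) * hBD n r (m + 1)
              - (r * hBD n r (m + 2) + (m:ℝ) * hBD n r m + gBD n r m)) := by
      field_simp
      ring
    have hfac : (0:ℝ) ≤ (((n:ℝ) - ((m:ℝ) + 1)) / ((n:ℝ) - 1)) *
        ((r + ((m:ℝ) + 1)) * hBD n r (m + 1)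
          - (r * hBD n r (m + 2) + (m:ℝ) * hBD n r m + gBD n r m)) := by
      rcases Nat.lt_or_ge (m + 1) n with hlt | hge
      · have hB := B_ineq hr hn2 m (by omega)
        have hc : (0:ℝ) ≤ ((n:ℝ) - ((m:ℝ) + 1)) / ((n:ℝ) - 1) := by
          have h2 : ((m:ℝ) + 1) ≤ (n : ℝ) := by exact_mod_cast hmn
          apply div_nonneg <;> linarith
        exact mul_nonneg hc (sub_nonneg.mpr hB)
      · have : m + 1 = n := le_antisymm hmn hge
        have : ((n:ℝ) - ((m:ℝ) + 1)) = 0 := by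
          rw [← this]; push_cast; ring
        rw [this, zero_div, zero_mul]
    linarith [hkey, hfac]
  · -- center is a resident
    rcases Finset.eq_empty_or_nonempty S with rfl | hSne
    · have h0 : phiCS n r z (∅ : Finset (Fin n)) = 0 := by simp [phiCS, gBD]
      rw [h0]
      simp
    · obtain ⟨m, hm⟩ : ∃ m, S.card = m + 1 :=
        ⟨S.card - 1, by have := Finset.card_pos.mpr hSne; omega⟩
      have hzC : z ∈ Sᶜ := Finset.mem_compl.mpr hzS
      have hmn : m + 2 ≤ n := by
        have h1 : 1 ≤ Sᶜ.card := Finset.one_le_card.mpr ⟨z, hzC⟩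
        rw [Finset.card_compl, Fintype.card_fin] at h1
        omega
      have hS1 : ∑ i ∈ S, ∑ j ∈ Sᶜ, r * starW n hn2 i j * phiCS n r z (insert j S)
          = (S.card : ℝ) * (r * hBD n r (S.card + 1)) := by
        have inner : ∀ i ∈ S, (∑ j ∈ Sᶜ, r * starW n hn2 i j * phiCS n r z (insert j S))
            = r * hBD n r (S.card + 1) := by
          intro i hi
          have hiz : i ≠ z := fun h => hzS (h ▸ hi)
          have step : ∀ j ∈ Sᶜ, r * starW n hn2 i j * phiCS n r z (insert j S)
              = if j = z then r * hBD n r (S.card + 1) else 0 := by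
            intro j hj
            rw [starW_eq n hn2 z hz, if_neg hiz]
            by_cases hjz : j = z
            · rw [if_pos hjz, if_pos hjz, hjz]
              have : phiCS n r z (insert z S) = hBD n r (S.card + 1) := by
                simp [phiCS, Finset.mem_insert, Finset.card_insert_of_notMem hzS]
              rw [this]; ring
            · rw [if_neg hjz, if_neg hjz]; ring
          rw [Finset.sum_congr rfl step, Finset.sum_ite_eq' Sᶜ z, if_pos hzC]
        rw [Finset.sum_congr rfl inner, Finset.sum_const, nsmul_eq_mul]
      have hS2 : ∑ j ∈ Sᶜ, ∑ i ∈ S, cliqueW n j i * phiCS n r z (S.erase i)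
          = ((n:ℝ) - S.card) * ((S.card : ℝ) * ((1 / ((n:ℝ) - 1)) * gBD n r m)) := by
        have inner : ∀ j ∈ Sᶜ, (∑ i ∈ S, cliqueW n j i * phiCS n r z (S.erase i))
            = (S.card : ℝ) * ((1 / ((n:ℝ) - 1)) * gBD n r m) := by
          intro j hj
          have hjS : j ∉ S := Finset.mem_compl.mp hj
          have step : ∀ i ∈ S, cliqueW n j i * phiCS n r z (S.erase i)
              = (1 / ((n:ℝ) - 1)) * gBD n r m := by
            intro i hi
            have hji : j ≠ i := fun h => hjS (h ▸ hi)
            rw [cliqueW_eq, if_neg hji]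
            have : phiCS n r z (S.erase i) = gBD n r m := by
              have hz2 : z ∉ S.erase i := fun h => hzS (Finset.mem_of_mem_erase h)
              simp [phiCS, hz2, Finset.card_erase_of_mem hi, hm]
            rw [this]
          rw [Finset.sum_congr rfl step, Finset.sum_const, nsmul_eq_mul]
        rw [Finset.sum_congr rfl inner, Finset.sum_const, nsmul_eq_mul, hCc]
      have hS3a : ∑ i ∈ S, ∑ j ∈ S, r * starW n hn2 i j = 0 := by
        apply Finset.sum_eq_zero; intro i hi
        apply Finset.sum_eq_zero; intro j hj
        have hiz : i ≠ z := fun h => hzS (h ▸ hi)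
        have hjz : j ≠ z := fun h => hzS (h ▸ hj)
        rw [starW_eq n hn2 z hz, if_neg hiz, if_neg hjz]
        ring
      have hphiS : phiCS n r z S = gBD n r (m + 1) := by
        simp [phiCS, hzS, hm]
      rw [hS1, hS2, hS3a, hS3b, hphiS, Fintype.card_fin, hm]
      push_cast
      rw [← sub_nonneg]
      have hA := gBD_succ_eq hr hn2 m (by omega)
      have hkey : gBD n r (m + 1) * (((m:ℝ) + 1) * r + ((n:ℝ) - ((m:ℝ) + 1)))
            - (((m:ℝ) + 1) * (r * hBD n r ((m + 1) + 1))
              + ((n:ℝ) - ((m:ℝ) + 1)) * (((m:ℝ) + 1) * ((1 / ((n:ℝ) - 1)) * gBD n r m))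
              + (0 + ((n:ℝ) - ((m:ℝ) + 1)) * (((n:ℝ) - ((m:ℝ) + 1) - 1) * (1 / ((n:ℝ) - 1))))
                * gBD n r (m + 1))
          = (((m:ℝ) + 1) / ((n:ℝ) - 1)) *
              ((r * ((n:ℝ) - 1) + ((n:ℝ) - ((m:ℝ) + 1))) * gBD n r (m + 1)
                - (r * ((n:ℝ) - 1) * hBD n r (m + 2) + ((n:ℝ) - ((m:ℝ) + 1)) * gBD n r m)) := by
        field_simp
        ring
      rw [hkey, hA]
      simp

lemma cliqueW_nonneg (hn : 2 ≤ n) (i j : Fin n) : 0 ≤ cliqueW n i j := by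
  have h2 : (2:ℝ) ≤ (n:ℝ) := by exact_mod_cast hn
  rw [cliqueW_eq]
  split
  · exact le_rfl
  · exact div_nonneg zero_le_one (by linarith)

lemma starW_nonneg (hn2 : 2 ≤ n) (i j : Fin n) : 0 ≤ starW n hn2 i j := by
  have h2 : (2:ℝ) ≤ (n:ℝ) := by exact_mod_cast hn2
  unfold starW
  split
  · split
    · exact le_rfl
    · exact div_nonneg zero_le_one (by linarith)
  · split
    · exact zero_le_one
    · exact le_rfl

lemma phiCS_nonneg (hr : 0 < r) (hn2 : 2 ≤ n) (z : Fin n) (S : Finset (Fin n)) :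
    0 ≤ phiCS n r z S := by
  have hc : S.card ≤ n := by simpa using Finset.card_le_univ S
  unfold phiCS
  split
  · exact hBD_nonneg hr (by omega) _
  · exact gBD_nonneg hr hn2 S.card hc

lemma phiCS_univ (hr : 0 < r) (hn2 : 2 ≤ n) (z : Fin n) :
    phiCS n r z (Finset.univ : Finset (Fin n)) = 1 := by
  unfold phiCS
  rw [if_pos (Finset.mem_univ z), Finset.card_univ, Fintype.card_fin]
  exact hBD_univ hr (by omega)

lemma phiCS_single (hr : 0 < r) (hn : 3 ≤ n) (z : Fin n) (u : Fin n) :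
    phiCS n r z {u} ≤ r ^ (n - 1) / (Nat.factorial (n - 2) : ℝ) := by
  have : phiCS n r z {u} = 1 / Psum r n := by
    unfold phiCS
    rw [Finset.card_singleton]
    split
    · exact hBD_one hr
    · exact gBD_one hr (by omega)
  rw [this]
  exact one_div_Z_le hr hn

lemma fixProb_CS (hn : 3 ≤ n) (hr : 0 < r) (hn2 : 2 ≤ n) :
    fixProb r (cliqueW n) (starW n hn2) ≤ r ^ (n - 1) / (Nat.factorial (n - 2) : ℝ) := by
  have hnpos : 0 < n := by omega
  have z : Fin n := ⟨0, hnpos⟩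
  have hz : ((⟨0, hnpos⟩ : Fin n) : ℕ) = 0 := rfl
  have key : ∀ u : Fin n, fixProbFrom r (cliqueW n) (starW n hn2) {u}
      ≤ r ^ (n - 1) / (Nat.factorial (n - 2) : ℝ) := by
    intro u
    refine le_trans (fixProbFrom_le_phi hr.le (cliqueW_nonneg hn2) (starW_nonneg hn2)
      (phiCS n r ⟨0, hnpos⟩) (phiCS_nonneg hr hn2 _) (le_of_eq (phiCS_univ hr hn2 _).symm)
      (hstep_CS hn hr hn2 ⟨0, hnpos⟩ hz) {u}) ?_
    exact phiCS_single hr hn _ u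
  unfold fixProb
  rw [div_le_iff₀ (by rw [Fintype.card_fin]; exact_mod_cast hnpos)]
  calc ∑ u : Fin n, fixProbFrom r (cliqueW n) (starW n hn2) {u}
      ≤ (Finset.univ : Finset (Fin n)).card • (r ^ (n - 1) / (Nat.factorial (n - 2) : ℝ)) :=
        Finset.sum_le_card_nsmul _ _ _ (fun u _ => key u)
    _ = r ^ (n - 1) / (Nat.factorial (n - 2) : ℝ) * (Fintype.card (Fin n) : ℝ) := by
        rw [Finset.card_univ, nsmul_eq_mul, mul_comm]

lemma fixProb_CS_nonneg (hn : 3 ≤ n) (hr : 0 < r) (hn2 : 2 ≤ n) :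
    0 ≤ fixProb r (cliqueW n) (starW n hn2) := by
  unfold fixProb
  apply div_nonneg _ (Nat.cast_nonneg _)
  exact Finset.sum_nonneg fun u _ =>
    fixProbFrom_nonneg hr.le (cliqueW_nonneg hn2) (starW_nonneg hn2) _

lemma cliqueW_sc (hn : 2 ≤ n) : StronglyConnectedW (cliqueW n) := by
  intro i j
  rcases eq_or_ne i j with rfl | hij
  · exact Relation.ReflTransGen.refl
  · refine Relation.ReflTransGen.single ?_
    have h2 : (2:ℝ) ≤ (n:ℝ) := by exact_mod_cast hn
    rw [cliqueW_eq, if_neg hij]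
    exact div_pos one_pos (by linarith)

lemma starW_sc (hn : 2 ≤ n) (hn2 : 2 ≤ n) : StronglyConnectedW (starW n hn2) := by
  have hnpos : 0 < n := by omega
  have hz : ((⟨0, hnpos⟩ : Fin n) : ℕ) = 0 := rfl
  have h2 : (2:ℝ) ≤ (n:ℝ) := by exact_mod_cast hn
  have hpos : (0:ℝ) < 1 / ((n:ℝ) - 1) := div_pos one_pos (by linarith)
  intro i j
  have h1 : Relation.ReflTransGen (fun a b => 0 < starW n hn2 a b) i ⟨0, hnpos⟩ := by
    rcases eq_or_ne i ⟨0, hnpos⟩ with rfl | h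
    · exact Relation.ReflTransGen.refl
    · refine Relation.ReflTransGen.single ?_
      rw [starW_eq n hn2 ⟨0, hnpos⟩ hz, if_neg h, if_pos rfl]
      norm_num
  have h2' : Relation.ReflTransGen (fun a b => 0 < starW n hn2 a b) ⟨0, hnpos⟩ j := by
    rcases eq_or_ne j ⟨0, hnpos⟩ with rfl | h
    · exact Relation.ReflTransGen.refl
    · refine Relation.ReflTransGen.single ?_
      rw [starW_eq n hn2 ⟨0, hnpos⟩ hz, if_pos rfl, if_neg h]
      exact hpos
  exact h1.trans h2'

end Main



/-- **An exponentially small fixation probability.** For every constant `r > 0`, the pair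
with `G_R` the complete graph and `G_M` the undirected star (both strongly connected) has
fixation probability at most `r^{n−1}/(n−2)!`; in particular there is a constant `a > 1`
such that the fixation probability is `o(a^{−n})`. -/
theorem clique_vs_star_exponentially_small
    (r : ℝ) (hr : 0 < r) :
    (∀ n : ℕ, ∀ hn : 3 ≤ n,
      StronglyConnectedW (cliqueW n) ∧ StronglyConnectedW (starW n (by omega)) ∧
      fixProb r (cliqueW n) (starW n (by omega)) ≤ r ^ (n - 1) / (Nat.factorial (n - 2) : ℝ)) ∧
    (∃ a : ℝ, 1 < a ∧
      Filter.Tendsto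
        (fun n : ℕ => fixProb r (cliqueW (n + 3)) (starW (n + 3) (by omega)) * a ^ (n + 3))
        Filter.atTop (nhds 0)) := by
  constructor
  · intro n hn
    exact ⟨cliqueW_sc (by omega), starW_sc (by omega) _, fixProb_CS hn hr (by omega)⟩
  · refine ⟨2, one_lt_two, ?_⟩
    have hfact : ∀ m : ℕ, ((Nat.factorial (m + 1) : ℝ)) ≠ 0 := fun m => by
      exact_mod_cast (Nat.factorial_pos (m + 1)).ne'
    have hub : ∀ m : ℕ, fixProb r (cliqueW (m + 3)) (starW (m + 3) (by omega)) * 2 ^ (m + 3)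
        ≤ (4 * r) * ((2 * r) ^ (m + 1) / (Nat.factorial (m + 1) : ℝ)) := by
      intro m
      have hb := fixProb_CS (n := m + 3) (by omega) hr (by omega)
      have he1 : m + 3 - 1 = m + 2 := rfl
      have he2 : m + 3 - 2 = m + 1 := rfl
      rw [he1, he2] at hb
      have h2pow : (0:ℝ) ≤ 2 ^ (m + 3) := by positivity
      calc fixProb r (cliqueW (m + 3)) (starW (m + 3) (by omega)) * 2 ^ (m + 3)
          ≤ (r ^ (m + 2) / (Nat.factorial (m + 1) : ℝ)) * 2 ^ (m + 3) :=
            mul_le_mul_of_nonneg_right hb h2pow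
        _ = (4 * r) * ((2 * r) ^ (m + 1) / (Nat.factorial (m + 1) : ℝ)) := by
            rw [div_mul_eq_mul_div, mul_div_assoc']
            congr 1
            rw [mul_pow]
            ring
    have hlb : ∀ m : ℕ,
        (0:ℝ) ≤ fixProb r (cliqueW (m + 3)) (starW (m + 3) (by omega)) * 2 ^ (m + 3) :=
      fun m => mul_nonneg (fixProb_CS_nonneg (by omega) hr (by omega)) (by positivity)
    have hg : Filter.Tendsto
        (fun m : ℕ => (4 * r) * ((2 * r) ^ (m + 1) / (Nat.factorial (m + 1) : ℝ)))
        Filter.atTop (nhds 0) := by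
      have h0 := FloorSemiring.tendsto_pow_div_factorial_atTop (K := ℝ) (2 * r)
      have h1 := h0.comp (Filter.tendsto_add_atTop_nat 1)
      have h2 := h1.const_mul (4 * r)
      simpa [Function.comp] using h2
    exact tendsto_of_tendsto_of_tendsto_of_le_of_le tendsto_const_nhds hg hlb hub
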